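/- Let n ≥ 1 and let r be a natural number with n ≤ r ≤ 2n − 1. Then for every natural number l ≥ 0 one has 2n·C(l+n−1, l) ≥ r·C(l+2n−r−1, l). -/
import Mathlib

/-- For the pseudogroup of local holomorphic transformations of a complex `n`-dimensional
manifold acting on real codimension-`r` submanifolds with `n ≤ r ≤ 2n - 1`, the
transversality dimension inequality `dim g^l ≥ dim h^l` holds for all `l`. -/
theorem complex_pseudogroup_dim_trans (n r : ℕ) (hn : 1 ≤ n) (hnr : n ≤ r)
    (hr : r ≤ 2 * n - 1) :
    ∀ l : ℕ, 2 * n * Nat.choose (l + n - 1) l ≥ r * Nat.choose (l + 2 * n - r - 1) l := by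
  intro l
  exact Nat.mul_le_mul (by omega) (Nat.choose_le_choose l (by omega))
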